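/- Let n ≥ 3 and λ ∈ ℂ, λ ≠ 0 with |Im λ|/|λ| ≤ (n-1)/(4(n-2)²). Suppose f, ψ in a complex inner product space satisfy ‖ψ‖ ≤ 2|Im λ|, ‖f‖ > 1/(2(n-2)), and -1 = (n-1)(λ²/|λ|²)‖f‖² + i(λ/|λ|²)(n-2)⟨ψ, f⟩ with Re(λ²) > 0. Then a contradiction follows. -/

import Mathlib

/-- No indicial roots in the sector `|Im λ|/|λ| ≤ (n-1)/(4(n-2)²)` with `Re (λ²) > 0`:
if `‖ψ‖ ≤ 2 |Im λ|`, `‖f‖ > 1/(2(n-2))`, and the identity (4.27)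
`-1 = (n-1)(λ²/|λ|²)‖f‖² + i(λ/|λ|²)(n-2)⟨ψ, f⟩` holds (with `⟨·,·⟩` conjugate-linear in
the second slot, i.e. Mathlib's `inner f ψ`), then we have a contradiction. -/
theorem no_indicial_root_in_sector
    {E : Type*} [NormedAddCommGroup E] [InnerProductSpace ℂ E]
    (n : ℕ) (hn : 3 ≤ n) (lam : ℂ) (hlam : lam ≠ 0)
    (hsector : |lam.im| / ‖lam‖ ≤ ((n : ℝ) - 1) / (4 * ((n : ℝ) - 2) ^ 2))
    (f ψ : E) (hψ : ‖ψ‖ ≤ 2 * |lam.im|) (hf : 1 / (2 * ((n : ℝ) - 2)) < ‖f‖)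
    (hre : 0 < (lam ^ 2).re)
    (heq : (-1 : ℂ) = ((n : ℝ) - 1) * (lam ^ 2 / (‖lam‖ : ℂ) ^ 2) * (‖f‖ ^ 2 : ℂ)
        + Complex.I * (lam / (‖lam‖ : ℂ) ^ 2) * ((n : ℝ) - 2) * (inner ℂ f ψ : ℂ)) :
    False := by
  have ha : 0 < ‖lam‖ := norm_pos_iff.mpr hlam
  set a : ℝ := ‖lam‖ with ha_def
  have hn2 : (1 : ℝ) ≤ (n : ℝ) - 2 := by
    have : (3 : ℝ) ≤ (n : ℝ) := by exact_mod_cast hn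
    linarith
  have hF : 0 < ‖f‖ := lt_trans (by positivity) hf
  set J1 : ℂ := ((n : ℝ) - 1) * (lam ^ 2 / (a : ℂ) ^ 2) * (‖f‖ ^ 2 : ℂ) with hJ1_def
  set J2 : ℂ := Complex.I * (lam / (a : ℂ) ^ 2) * ((n : ℝ) - 2) * (inner ℂ f ψ : ℂ) with hJ2_def
  -- J1 as a real scalar times lam^2
  have hc : (0 : ℝ) < ((n : ℝ) - 1) * ‖f‖ ^ 2 / a ^ 2 :=
    div_pos (mul_pos (by linarith) (by positivity)) (by positivity)
  have hJ1 : J1 = ((((n : ℝ) - 1) * ‖f‖ ^ 2 / a ^ 2 : ℝ) : ℂ) * lam ^ 2 := by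
    rw [hJ1_def]; push_cast; ring
  have hreJ1 : 0 < J1.re := by
    rw [hJ1, Complex.re_ofReal_mul]
    exact mul_pos hc hre
  have habs_lam2 : ‖lam ^ 2‖ = a ^ 2 := by
    rw [norm_pow]
  have habsJ1 : ‖J1‖ = ((n : ℝ) - 1) * ‖f‖ ^ 2 := by
    rw [hJ1, norm_mul, habs_lam2, Complex.norm_real, Real.norm_eq_abs, abs_of_pos hc]
    field_simp
  have habsJ2 : ‖J2‖ ≤ (1 / a) * (((n : ℝ) - 2) * (‖f‖ * ‖ψ‖)) := by
    rw [hJ2_def]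
    rw [norm_mul, norm_mul, norm_mul, Complex.norm_I, one_mul, norm_div]
    have h1 : ‖(a : ℂ) ^ 2‖ = a ^ 2 := by
      rw [norm_pow, Complex.norm_real, Real.norm_eq_abs, abs_of_pos ha]
    have h2 : ‖(((n:ℝ)) : ℂ) - 2‖ = (n : ℝ) - 2 := by
      rw [show ((((n:ℝ)) : ℂ) - 2) = (((n : ℝ) - 2 : ℝ) : ℂ) by push_cast; ring,
        Complex.norm_real, Real.norm_eq_abs, abs_of_pos]; linarith
    have h3 : ‖(inner ℂ f ψ : ℂ)‖ ≤ ‖f‖ * ‖ψ‖ := by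
      simpa using norm_inner_le_norm (𝕜 := ℂ) f ψ
    rw [h1, h2, ha_def]
    have hle : ‖lam‖ / ‖lam‖ ^ 2 = 1 / ‖lam‖ := by
      field_simp
    rw [hle]
    have hmul : 1 / ‖lam‖ * ((n:ℝ)-2) * ‖(inner ℂ f ψ : ℂ)‖
        ≤ 1 / ‖lam‖ * ((n:ℝ)-2) * (‖f‖ * ‖ψ‖) := by
      apply mul_le_mul_of_nonneg_left h3
      positivity
    calc 1 / ‖lam‖ * ((n:ℝ)-2) * ‖(inner ℂ f ψ : ℂ)‖
        ≤ 1 / ‖lam‖ * ((n:ℝ)-2) * (‖f‖ * ‖ψ‖) := hmul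
      _ = 1 / ‖lam‖ * (((n:ℝ)-2) * (‖f‖ * ‖ψ‖)) := by ring
  -- From the equation: J2 = -1 - J1, so |J2| = |1 + J1| > |J1|
  have hJ2eq : J2 = -1 - J1 := by
    rw [hJ1_def, hJ2_def] at heq ⊢; linear_combination -heq
  have hgt : ‖J1‖ < ‖J2‖ := by
    rw [hJ2eq]
    have : ‖-1 - J1‖ = ‖1 + J1‖ := by
      rw [show (-1 - J1 : ℂ) = -(1 + J1) by ring, norm_neg]
    rw [this]
    have hsq : ‖J1‖ ^ 2 < ‖1 + J1‖ ^ 2 := by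
      rw [Complex.sq_norm, Complex.sq_norm, Complex.normSq_apply, Complex.normSq_apply]
      simp only [Complex.add_re, Complex.add_im, Complex.one_re, Complex.one_im]
      nlinarith [hreJ1]
    exact lt_of_pow_lt_pow_left₀ 2 (norm_nonneg _) hsq
  -- Upper bound on |J2| beats |J1|: contradiction
  have hub : (1 / a) * (((n : ℝ) - 2) * (‖f‖ * ‖ψ‖)) < ((n : ℝ) - 1) * ‖f‖ ^ 2 := by
    have h1 : ‖ψ‖ / a ≤ 2 * (|lam.im| / a) := by
      rw [div_le_iff₀ ha]
      calc ‖ψ‖ ≤ 2 * |lam.im| := hψ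
        _ = 2 * (|lam.im| / a) * a := by field_simp
    have h2 : |lam.im| / a ≤ ((n : ℝ) - 1) / (4 * ((n : ℝ) - 2) ^ 2) := hsector
    have h3 : (0:ℝ) ≤ ‖ψ‖ / a := by positivity
    have key : (1 / a) * (((n : ℝ) - 2) * (‖f‖ * ‖ψ‖))
        = ((n : ℝ) - 2) * ‖f‖ * (‖ψ‖ / a) := by ring
    rw [key]
    have hstep : ((n:ℝ)-2) * ‖f‖ * (‖ψ‖ / a) ≤ ((n:ℝ)-2) * ‖f‖ * (((n:ℝ)-1) / (2 * ((n:ℝ)-2)^2)) := by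
      apply mul_le_mul_of_nonneg_left _ (by positivity)
      calc ‖ψ‖ / a ≤ 2 * (|lam.im| / a) := h1
        _ ≤ 2 * (((n : ℝ) - 1) / (4 * ((n : ℝ) - 2) ^ 2)) := by linarith
        _ = ((n:ℝ)-1) / (2 * ((n:ℝ)-2)^2) := by
            have hne : ((n:ℝ)-2) ≠ 0 := by linarith
            field_simp; ring
    refine lt_of_le_of_lt hstep ?_
    have hne : ((n:ℝ)-2) ≠ 0 := by linarith
    have : ((n:ℝ)-2) * ‖f‖ * (((n:ℝ)-1) / (2 * ((n:ℝ)-2)^2))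
        = (((n:ℝ)-1) / (2 * ((n:ℝ)-2))) * ‖f‖ := by field_simp
    rw [this]
    have hlt : ((n:ℝ)-1) / (2 * ((n:ℝ)-2)) < ((n:ℝ)-1) * ‖f‖ := by
      have h4 : (0:ℝ) < (n:ℝ) - 1 := by linarith
      rw [div_lt_iff₀ (by positivity : (0:ℝ) < 2 * ((n:ℝ)-2))]
      have h5 : 1 < ‖f‖ * (2 * ((n:ℝ)-2)) :=
        (div_lt_iff₀ (by positivity : (0:ℝ) < 2 * ((n:ℝ)-2))).mp hf
      nlinarith [mul_lt_mul_of_pos_left h5 h4]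
    calc (((n:ℝ)-1) / (2 * ((n:ℝ)-2))) * ‖f‖
        < (((n:ℝ)-1) * ‖f‖) * ‖f‖ := mul_lt_mul_of_pos_right hlt hF
      _ = ((n:ℝ)-1) * ‖f‖ ^ 2 := by ring
  have := lt_of_lt_of_le hgt habsJ2
  rw [habsJ1] at this
  linarith
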